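/- arXiv:2009.07351 — 2 statements merged into one kernel-verified Lean document; each statement's English description precedes it below -/
import Mathlib

section
/- With the setup of the previous statement, if additionally Σ_{ν∈U} x_ν < N, then (((Π_{ν∈U} y_ν) - 1 mod N²) / N) mod N = Σ_{ν∈U} x_ν, where the division by N is exact integer division. -/
/-- Decoding the aggregate from the product of masked values. -/
theorem stmt_4 (N : ℕ) (hN : 2 ≤ N) (U : Type) [Fintype U]
    (x : U → ℕ) (hx : ∑ ν : U, x ν < N) (p : U → ℤ) (hp : ∑ ν : U, p ν = 0)
    (h : (ZMod (N ^ 2))ˣ) (hord : orderOf h ∣ N)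
    (y : U → ZMod (N ^ 2))
    (hy : ∀ ν, y ν = (1 + (N : ZMod (N ^ 2))) ^ (x ν) * ((h ^ (p ν) : (ZMod (N ^ 2))ˣ) : ZMod (N ^ 2))) :
    (((∏ ν : U, y ν).val - 1) / N) % N = ∑ ν : U, x ν := by
  have hNpos : 0 < N := by omega
  haveI : NeZero (N ^ 2) := ⟨by positivity⟩
  set S := ∑ ν : U, x ν with hS
  have hNsq : (N : ZMod (N ^ 2)) * N = 0 := by
    have h0 : ((N ^ 2 : ℕ) : ZMod (N ^ 2)) = 0 := ZMod.natCast_self _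
    push_cast at h0
    linear_combination h0
  have key : ∀ n : ℕ, (1 + (N : ZMod (N ^ 2))) ^ n = 1 + (n : ZMod (N ^ 2)) * N := by
    intro n
    induction n with
    | zero => simp
    | succ k ih =>
      have e : (1 + (N : ZMod (N ^ 2))) ^ (k + 1)
          = (1 + (N : ZMod (N ^ 2))) ^ k * (1 + N) := pow_succ _ _
      rw [e, ih]
      push_cast
      linear_combination (k : ZMod (N ^ 2)) * hNsq
  have hunits : (∏ ν : U, ((h ^ (p ν) : (ZMod (N ^ 2))ˣ) : ZMod (N ^ 2))) = 1 := by
    have hz : ∀ s : Finset U, (∏ ν ∈ s, ((h ^ (p ν) : (ZMod (N ^ 2))ˣ) : ZMod (N ^ 2)))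
        = ((h ^ (∑ ν ∈ s, p ν) : (ZMod (N ^ 2))ˣ) : ZMod (N ^ 2)) := by
      intro s
      classical
      induction s using Finset.induction with
      | empty => simp
      | insert _ _ hns ih =>
        rw [Finset.prod_insert hns, Finset.sum_insert hns, ih, zpow_add, Units.val_mul]
    rw [hz, hp, zpow_zero, Units.val_one]
  have hprod : ∏ ν : U, y ν = 1 + (S : ZMod (N ^ 2)) * N := by
    calc ∏ ν : U, y ν
        = (∏ ν : U, (1 + (N : ZMod (N ^ 2))) ^ (x ν)) *
          ∏ ν : U, ((h ^ (p ν) : (ZMod (N ^ 2))ˣ) : ZMod (N ^ 2)) := by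
          simp_rw [hy]; rw [Finset.prod_mul_distrib]
      _ = (1 + (N : ZMod (N ^ 2))) ^ S := by
          rw [hunits, mul_one, Finset.prod_pow_eq_pow_sum]
      _ = 1 + (S : ZMod (N ^ 2)) * N := key S
  have hlt : 1 + S * N < N ^ 2 := by nlinarith
  have hval : (∏ ν : U, y ν).val = 1 + S * N := by
    rw [hprod]
    have hc : ((1 + S * N : ℕ) : ZMod (N ^ 2)) = 1 + (S : ZMod (N ^ 2)) * N := by
      push_cast; ring
    rw [← hc, ZMod.val_cast_of_lt hlt]
  rw [hval, Nat.add_sub_cancel_left, Nat.mul_div_cancel _ hNpos, Nat.mod_eq_of_lt hx]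
end

section
/- Correctness of Feddy full pipeline: Let N ≥ 2, q = N, U finite. Users generate pairwise pads p(ν,μ) = s(ν,μ) - s(μ,ν) with s(ν,ν)=0, set p_ν = Σ_μ p(ν,μ), and mask y_ν = (1+N)^{x_ν} h^{p_ν} mod N² where h has order dividing N and x : U → ℕ with Σ x_ν < N. Then (((Π_ν y_ν) - 1 mod N²)/N) mod N = Σ_ν x_ν. -/
lemma binom_pow (N : ℕ) (m : ℕ) :
    (1 + (N : ZMod (N ^ 2))) ^ m = 1 + (m * N : ℕ) := by
  have hN2 : ((N : ZMod (N ^ 2)) * N) = 0 := by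
    have : ((N ^ 2 : ℕ) : ZMod (N ^ 2)) = 0 := ZMod.natCast_self _
    push_cast at this
    linear_combination this
  induction m with
  | zero => simp
  | succ k ih =>
    rw [pow_succ (1 + (N : ZMod (N ^ 2))) k, ih]
    push_cast
    linear_combination (k : ZMod (N^2)) * hN2

/-- Correctness of the full Feddy pipeline: pairwise pads, Paillier-style masking,
    and decoding recover the sum of the inputs. -/
theorem stmt_18 (N : ℕ) (hN : 2 ≤ N) (U : Type) [Fintype U]
    (s : U → U → ZMod N) (hs : ∀ ν, s ν ν = 0)
    (pp : U → U → ZMod N) (hpp : ∀ ν μ, pp ν μ = s ν μ - s μ ν)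
    (p : U → ZMod N) (hp : ∀ ν, p ν = ∑ μ : U, pp ν μ)
    (h : (ZMod (N ^ 2))ˣ) (hord : orderOf h ∣ N)
    (x : U → ℕ) (hx : ∑ ν : U, x ν < N)
    (y : U → ZMod (N ^ 2))
    (hy : ∀ ν, y ν = (1 + (N : ZMod (N ^ 2))) ^ (x ν) * ((h ^ ((p ν).val) : (ZMod (N ^ 2))ˣ) : ZMod (N ^ 2))) :
    (((∏ ν : U, y ν).val - 1) / N) % N = ∑ ν : U, x ν := by
  set m := ∑ ν : U, x ν with hm
  have hNpos : 0 < N := by omega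
  have hsump : ∑ ν : U, p ν = 0 := by
    simp only [hp, hpp, Finset.sum_sub_distrib, sub_eq_zero]
    exact Finset.sum_comm
  have hdvd : N ∣ ∑ ν : U, (p ν).val := by
    haveI : NeZero N := ⟨by omega⟩
    have hc : ((∑ ν : U, (p ν).val : ℕ) : ZMod N) = 0 := by
      push_cast
      simpa [ZMod.natCast_val, ZMod.cast_id] using hsump
    exact (ZMod.natCast_eq_zero_iff _ _).mp hc
  have hh : h ^ (∑ ν : U, (p ν).val) = 1 :=
    orderOf_dvd_iff_pow_eq_one.mp (hord.trans hdvd)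
  have hone : ∏ ν : U, ((h ^ ((p ν).val) : (ZMod (N ^ 2))ˣ) : ZMod (N ^ 2)) = 1 := by
    have hmap := map_prod (Units.coeHom (ZMod (N ^ 2))) (fun ν => h ^ ((p ν).val)) Finset.univ
    simp only [Units.coeHom_apply] at hmap
    rw [← hmap, Finset.prod_pow_eq_pow_sum, hh]
    simp
  have hprod : ∏ ν : U, y ν = (1 + (N : ZMod (N ^ 2))) ^ m := by
    simp only [hy]
    rw [Finset.prod_mul_distrib, hone, mul_one, Finset.prod_pow_eq_pow_sum]
  rw [hprod, binom_pow]
  have hlt : m * N + 1 < N ^ 2 := by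
    have : m + 1 ≤ N := hx
    nlinarith
  rw [show (1 + (m * N : ℕ) : ZMod (N^2)) = ((m * N + 1 : ℕ) : ZMod (N^2)) by push_cast; ring]
  rw [ZMod.val_cast_of_lt hlt]
  rw [Nat.add_sub_cancel, Nat.mul_div_cancel _ hNpos, Nat.mod_eq_of_lt hx]
end
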